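/- arXiv:1710.04602 — 8 statements merged into one kernel-verified Lean document; each statement's English description precedes it below -/
import Mathlib

section
/- Let P(X,Y,Z) = X + 1/X + Y + 1/Y + Z + 1/Z - 2. If X, Y lie on the unit circle, Z is a complex number with |Z| > 1, and P(X,Y,Z) = 0, then Z is a real number satisfying Z > 1, and moreover Re(X) + Re(Y) < 0 and Z = 1 - Re(X) - Re(Y) + sqrt((1 - Re(X) - Re(Y))^2 - 1). -/
open Complex

theorem stmt_0 (X Y Z : ℂ) (hX : ‖X‖ = 1) (hY : ‖Y‖ = 1)
    (hZ : 1 < ‖Z‖)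
    (heq : X + X⁻¹ + Y + Y⁻¹ + Z + Z⁻¹ - 2 = 0) :
    Z.im = 0 ∧ 1 < Z.re ∧ X.re + Y.re < 0 ∧
      Z = ((1 - X.re - Y.re + Real.sqrt ((1 - X.re - Y.re) ^ 2 - 1) : ℝ) : ℂ) := by
  have hZ0 : Z ≠ 0 := by intro h; simp [h] at hZ; linarith
  have hXinv : X⁻¹ = starRingEnd ℂ X := by
    rw [Complex.inv_def, Complex.normSq_eq_norm_sq, hX]; simp
  have hYinv : Y⁻¹ = starRingEnd ℂ Y := by
    rw [Complex.inv_def, Complex.normSq_eq_norm_sq, hY]; simp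
  set a := X.re with ha
  set b := Y.re with hb
  have hXre : X + X⁻¹ = ((2*a : ℝ) : ℂ) := by rw [hXinv, Complex.add_conj]
  have hYre : Y + Y⁻¹ = ((2*b : ℝ) : ℂ) := by rw [hYinv, Complex.add_conj]
  set t : ℝ := 1 - a - b with ht
  have htc : (t : ℂ) = 1 - (a:ℂ) - (b:ℂ) := by rw [ht]; push_cast; ring
  have h1 : Z + Z⁻¹ = ((2*t : ℝ) : ℂ) := by
    push_cast
    push_cast at hXre hYre
    linear_combination heq - hXre - hYre - 2*htc
  have hquad : Z^2 + 1 = ((2*t : ℝ) : ℂ) * Z := by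
    have h2 := congrArg (· * Z) h1
    field_simp at h2
    push_cast at h2 ⊢
    linear_combination h2
  have hre : Z.re^2 - Z.im^2 + 1 = 2*t*Z.re := by
    have := congrArg Complex.re hquad
    simp [Complex.mul_re, Complex.mul_im, pow_two] at this
    linarith [this]
  have him : 2*Z.re*Z.im = 2*t*Z.im := by
    have := congrArg Complex.im hquad
    simp [Complex.mul_re, Complex.mul_im, pow_two] at this
    linarith [this]
  have habs : 1 < Z.re^2 + Z.im^2 := by
    have h3 : ‖Z‖ ^ 2 = Z.re^2 + Z.im^2 := by
      rw [Complex.sq_norm, Complex.normSq_apply]; ring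
    nlinarith [hZ, norm_nonneg Z]
  have ha1 : |a| ≤ 1 := by rw [← hX]; exact Complex.abs_re_le_norm X
  have hb1 : |b| ≤ 1 := by rw [← hY]; exact Complex.abs_re_le_norm Y
  rw [abs_le] at ha1 hb1
  have himz : Z.im = 0 := by
    by_contra h
    have hzr : Z.re = t := by
      have h2 : (Z.re - t) * Z.im = 0 := by linarith [him]
      rcases mul_eq_zero.mp h2 with h3 | h3
      · linarith
      · exact absurd h3 h
    rw [hzr] at hre habs
    nlinarith [habs, hre]
  set z := Z.re with hz
  have him2 : Z.im^2 = 0 := by rw [himz]; ring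
  have hre' : z^2 + 1 = 2*t*z := by nlinarith [hre, him2]
  have habs' : 1 < z^2 := by nlinarith [habs, him2]
  have hz1 : 1 < z := by
    rcases lt_or_ge 1 z with h | h
    · exact h
    have hzneg : z < -1 := by nlinarith [habs']
    nlinarith [mul_nonneg (by linarith [ha1.2, hb1.2] : (0:ℝ) ≤ t + 1)
      (by linarith : (0:ℝ) ≤ -z)]
  have htgt : 1 < t := by nlinarith [sq_nonneg (z - 1)]
  refine ⟨himz, hz1, by linarith, ?_⟩
  have hsq : t^2 - 1 = ((z^2-1)/(2*z))^2 := by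
    field_simp
    linear_combination (-(2*t*z) - z^2 - 1) * hre'
  have hsqrt : Real.sqrt (t^2 - 1) = (z^2-1)/(2*z) := by
    rw [hsq, Real.sqrt_sq (div_nonneg (by nlinarith) (by linarith))]
  have hzval : z = t + Real.sqrt (t^2-1) := by
    rw [hsqrt]
    field_simp
    linear_combination hre'
  apply Complex.ext
  · simpa using hzval
  · simpa using himz
end

section
/- For X, Y on the complex unit circle, the equation X + 1/X + Y + 1/Y + Z + 1/Z - 2 = 0 with real Z > 1 has Z varying in the interval (1, 3 + 2*sqrt(2)], and Z = 3 + 2*sqrt(2) is attained only at (X,Y) = (-1,-1). -/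
open Complex

theorem stmt_1 (X Y : ℂ) (Z : ℝ) (hX : ‖X‖ = 1) (hY : ‖Y‖ = 1)
    (hZ : 1 < Z)
    (heq : X + X⁻¹ + Y + Y⁻¹ + (Z : ℂ) + (Z : ℂ)⁻¹ = 2) :
    Z ∈ Set.Ioc 1 (3 + 2 * Real.sqrt 2) ∧
      (Z = 3 + 2 * Real.sqrt 2 → X = -1 ∧ Y = -1) := by
  have hZ0 : (0:ℝ) < Z := lt_trans one_pos hZ
  have hXc : X⁻¹ = (starRingEnd ℂ) X := Complex.inv_eq_conj hX
  have hYc : Y⁻¹ = (starRingEnd ℂ) Y := Complex.inv_eq_conj hY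
  have hkey : X.re + X.re + Y.re + Y.re + Z + Z⁻¹ = 2 := by
    have h := congrArg Complex.re heq
    rw [hXc, hYc, ← Complex.ofReal_inv] at h
    simpa using h
  have hXre : -1 ≤ X.re := by
    have := Complex.abs_re_le_norm X
    rw [hX] at this
    linarith [abs_le.mp this |>.1]
  have hYre : -1 ≤ Y.re := by
    have := Complex.abs_re_le_norm Y
    rw [hY] at this
    linarith [abs_le.mp this |>.1]
  have hXre' : X.re ≤ 1 := by
    have := Complex.abs_re_le_norm X
    rw [hX] at this
    linarith [abs_le.mp this |>.2]
  have hinv : Z * Z⁻¹ = 1 := mul_inv_cancel₀ hZ0.ne'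
  have hs : Real.sqrt 2 ^ 2 = 2 := Real.sq_sqrt (by norm_num)
  have hs0 : (0:ℝ) ≤ Real.sqrt 2 := Real.sqrt_nonneg 2
  have hZZ : Z + Z⁻¹ ≤ 6 := by linarith
  have hZle : Z ≤ 3 + 2 * Real.sqrt 2 := by
    nlinarith [sq_nonneg (Z - 3), sq_nonneg (Real.sqrt 2 - 1), mul_pos hZ0 hZ0]
  refine ⟨⟨hZ, hZle⟩, fun hZeq => ?_⟩
  have hinv6 : Z⁻¹ = 6 - Z := by
    have : Z * (6 - Z) = 1 := by rw [hZeq]; nlinarith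
    field_simp
    nlinarith
  have hXm1 : X.re = -1 := by
    rw [hinv6] at hkey
    linarith
  have hYm1 : Y.re = -1 := by
    rw [hinv6] at hkey
    linarith
  have hXim : X.im = 0 := by
    have h1 : ‖X‖ ^ 2 = X.re * X.re + X.im * X.im := by
      rw [Complex.sq_norm, Complex.normSq_apply]
    rw [hX, hXm1] at h1
    nlinarith
  have hYim : Y.im = 0 := by
    have h1 : ‖Y‖ ^ 2 = Y.re * Y.re + Y.im * Y.im := by
      rw [Complex.sq_norm, Complex.normSq_apply]
    rw [hY, hYm1] at h1
    nlinarith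
  constructor <;> (apply Complex.ext <;> simp [hXm1, hXim, hYm1, hYim])
end

section
/- On the elliptic curve V^2 + k*U*V = U*(U-1)^2 over the field Q(Z) with k = Z + 1/Z - 2, the point A = (Z, Z-1) satisfies 2A = (1,0) and 4A = (0,0); in particular A is a point of order 8. -/
open WeierstrassCurve

noncomputable def E18Curve : WeierstrassCurve.Affine (RatFunc ℚ) :=
  { a₁ := RatFunc.X + RatFunc.X⁻¹ - 2, a₂ := -2, a₃ := 0, a₄ := 1, a₆ := 0 }

open Polynomial

lemma aux_some_ext {F : Type*} [Field F] {W : Affine F} {x₁ y₁ x₂ y₂ : F}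
    (h₁ : W.Nonsingular x₁ y₁) (h₂ : W.Nonsingular x₂ y₂) (hx : x₁ = x₂) (hy : y₁ = y₂) :
    Affine.Point.some _ _ h₁ = Affine.Point.some _ _ h₂ := by subst hx; subst hy; rfl

lemma aux_sq_sub_one : (RatFunc.X : RatFunc ℚ) ^ 2 - 1 ≠ 0 := by
  have : (RatFunc.X : RatFunc ℚ) ^ 2 - 1 = algebraMap ℚ[X] (RatFunc ℚ) (X ^ 2 - 1) := by
    simp [map_sub, map_pow, RatFunc.algebraMap_X]
  rw [this]
  apply RatFunc.algebraMap_ne_zero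
  intro h
  have := congrArg (Polynomial.eval 0) h
  simp at this

lemma aux_t_sub_one : (RatFunc.X : RatFunc ℚ) - 1 ≠ 0 := by
  intro h
  apply aux_sq_sub_one
  linear_combination (RatFunc.X + 1) * h

lemma aux_hy1 : (RatFunc.X : RatFunc ℚ) - 1 ≠ E18Curve.negY RatFunc.X (RatFunc.X - 1) := by
  intro h
  rw [Affine.negY] at h
  simp only [E18Curve] at h
  field_simp [RatFunc.X_ne_zero] at h
  exact aux_sq_sub_one (by linear_combination h)

lemma aux_hy2 : (0 : RatFunc ℚ) ≠ E18Curve.negY 1 0 := by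
  intro h
  rw [Affine.negY] at h
  simp only [E18Curve] at h
  field_simp [RatFunc.X_ne_zero] at h
  have h2 : ((RatFunc.X : RatFunc ℚ) - 1) ^ 2 = 0 := by linear_combination h
  exact aux_t_sub_one (pow_eq_zero_iff two_ne_zero |>.mp h2)

lemma aux_hy4 : (0 : RatFunc ℚ) = E18Curve.negY 0 0 := by
  rw [Affine.negY]; simp only [E18Curve]; ring

open Classical in
lemma aux_slope1 : E18Curve.slope RatFunc.X RatFunc.X (RatFunc.X - 1) (RatFunc.X - 1)
    = 2 - RatFunc.X⁻¹ := by
  rw [Affine.slope_of_Y_ne rfl aux_hy1]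
  rw [div_eq_iff (sub_ne_zero.mpr aux_hy1)]
  rw [Affine.negY]
  simp only [E18Curve]
  field_simp [RatFunc.X_ne_zero]
  ring

open Classical in
lemma aux_slope2 : E18Curve.slope 1 1 0 0 = 0 := by
  rw [Affine.slope_of_Y_ne rfl aux_hy2]
  simp only [E18Curve]
  norm_num

open Classical in
lemma aux_addX1 : E18Curve.addX RatFunc.X RatFunc.X
    (E18Curve.slope RatFunc.X RatFunc.X (RatFunc.X - 1) (RatFunc.X - 1)) = 1 := by
  rw [aux_slope1, Affine.addX]
  simp only [E18Curve]
  field_simp [RatFunc.X_ne_zero]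
  ring

open Classical in
lemma aux_addY1 : E18Curve.addY RatFunc.X RatFunc.X (RatFunc.X - 1)
    (E18Curve.slope RatFunc.X RatFunc.X (RatFunc.X - 1) (RatFunc.X - 1)) = 0 := by
  rw [aux_slope1, Affine.addY, Affine.negAddY, Affine.addX, Affine.negY]
  simp only [E18Curve]
  field_simp [RatFunc.X_ne_zero]
  ring

open Classical in
lemma aux_addX2 : E18Curve.addX 1 1 (E18Curve.slope 1 1 0 0) = 0 := by
  rw [aux_slope2, Affine.addX]
  simp only [E18Curve]
  norm_num

open Classical in
lemma aux_addY2 : E18Curve.addY 1 1 0 (E18Curve.slope 1 1 0 0) = 0 := by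
  rw [aux_slope2, Affine.addY, Affine.negAddY, Affine.addX, Affine.negY]
  simp only [E18Curve]
  norm_num

open Classical in
theorem stmt_4
    (hA : E18Curve.Nonsingular RatFunc.X (RatFunc.X - 1))
    (h2 : E18Curve.Nonsingular 1 0)
    (h4 : E18Curve.Nonsingular 0 0) :
    2 • (WeierstrassCurve.Affine.Point.some _ _ hA) = WeierstrassCurve.Affine.Point.some _ _ h2 ∧
    4 • (WeierstrassCurve.Affine.Point.some _ _ hA) = WeierstrassCurve.Affine.Point.some _ _ h4 ∧
    addOrderOf (WeierstrassCurve.Affine.Point.some _ _ hA) = 8 := by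
  have key2 : 2 • (Affine.Point.some _ _ hA) = Affine.Point.some _ _ h2 := by
    rw [two_nsmul, Affine.Point.add_self_of_Y_ne aux_hy1]
    exact aux_some_ext _ _ aux_addX1 aux_addY1
  have key4 : 4 • (Affine.Point.some _ _ hA) = Affine.Point.some _ _ h4 := by
    rw [show (4 : ℕ) = 2 * 2 from rfl, mul_smul, key2, two_nsmul,
      Affine.Point.add_self_of_Y_ne aux_hy2]
    exact aux_some_ext _ _ aux_addX2 aux_addY2
  have key8 : 8 • (Affine.Point.some _ _ hA) = 0 := by
    rw [show (8 : ℕ) = 2 * 4 from rfl, mul_smul, key4, two_nsmul]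
    exact Affine.Point.add_self_of_Y_eq aux_hy4
  refine ⟨key2, key4, ?_⟩
  haveI : Fact (Nat.Prime 2) := ⟨Nat.prime_two⟩
  have := addOrderOf_eq_prime_pow (p := 2) (n := 2)
    (by rw [show (2:ℕ)^2 = 4 from rfl, key4]; exact Affine.Point.some_ne_zero h4)
    (by rw [show (2:ℕ)^(2+1) = 8 from rfl]; exact key8)
  simpa using this
end

section
/- Let (X, Y, t) be nonzero complex numbers with |X| = |Y| = 1 and (X + 1/X - 2)(Y + 1/Y + 2) + 2i*(t - i)^4/(t^3 - t) = 0 and |t| > 1. Then writing t = u + iv with u, v real, one has 2u*(u^2 + v^2 + 2u - 1)*(u^2 + v^2 - 2u - 1)*(u^2 + v^2 - 1) = 0. -/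
open Complex

theorem stmt_6 (X Y t : ℂ) (hX : ‖X‖ = 1) (hY : ‖Y‖ = 1)
    (ht : 1 < ‖t‖) (ht' : t ^ 3 - t ≠ 0)
    (heq : (X + X⁻¹ - 2) * (Y + Y⁻¹ + 2) + 2 * I * (t - I) ^ 4 / (t ^ 3 - t) = 0) :
    2 * t.re * (t.re ^ 2 + t.im ^ 2 + 2 * t.re - 1) * (t.re ^ 2 + t.im ^ 2 - 2 * t.re - 1) *
      (t.re ^ 2 + t.im ^ 2 - 1) = 0 := by
  have hnX : Complex.normSq X = 1 := by
    rw [← Complex.sq_norm, hX]; norm_num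
  have hnY : Complex.normSq Y = 1 := by
    rw [← Complex.sq_norm, hY]; norm_num
  have hA : (X + X⁻¹ - 2).im = 0 := by
    simp [Complex.inv_im, hnX]
  have hB : (Y + Y⁻¹ + 2).im = 0 := by
    simp [Complex.inv_im, hnY]
  set w : ℂ := 2 * I * (t - I) ^ 4 / (t ^ 3 - t) with hw
  have hwval : w = -((X + X⁻¹ - 2) * (Y + Y⁻¹ + 2)) := by
    linear_combination heq
  have hwim : w.im = 0 := by
    rw [hwval]
    simp [Complex.mul_im, hA, hB]
  have h2 : 2 * I * (t - I) ^ 4 * (starRingEnd ℂ) (t ^ 3 - t)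
      = w * ((t ^ 3 - t) * (starRingEnd ℂ) (t ^ 3 - t)) := by
    rw [hw, div_mul_eq_mul_div, eq_div_iff ht']; ring
  have h3 : (2 * I * (t - I) ^ 4 * (starRingEnd ℂ) (t ^ 3 - t)).im = 0 := by
    rw [h2, Complex.mul_conj, Complex.mul_im, hwim]
    simp
  have h4 : (2 * I * (t - I) ^ 4 * (starRingEnd ℂ) (t ^ 3 - t)).im
      = 2 * t.re * (t.re ^ 2 + t.im ^ 2 + 2 * t.re - 1) * (t.re ^ 2 + t.im ^ 2 - 2 * t.re - 1) *
        (t.re ^ 2 + t.im ^ 2 - 1) := by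
    simp only [map_sub, map_pow, Complex.mul_im, Complex.mul_re, Complex.sub_re,
      Complex.sub_im, Complex.I_re, Complex.I_im, Complex.conj_re, Complex.conj_im,
      Complex.re_ofNat, Complex.im_ofNat, pow_succ, pow_zero, one_mul]
    ring
  rw [← h4, h3]
end

section
/- The birational transformation X = (x + y - s + 1)/(x + y), Y = (s-1)(x - y)(x + y - s + 1)/(2(x+y)^2) sends solutions of s = (x+y+1)(1/x + 1/y + 1) to solutions of the Weierstrass equation Y^2 = X^3 + ((s-3)^2 - 12)/4 * X^2 + s*X, whenever x, y ≠ 0 and x + y ≠ 0. -/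
theorem stmt_10 (x y s : ℂ) (hx : x ≠ 0) (hy : y ≠ 0) (hxy : x + y ≠ 0)
    (heq : s = (x + y + 1) * (x⁻¹ + y⁻¹ + 1)) :
    ((s - 1) * (x - y) * (x + y - s + 1) / (2 * (x + y) ^ 2)) ^ 2 =
      ((x + y - s + 1) / (x + y)) ^ 3 +
        ((s - 3) ^ 2 - 12) / 4 * ((x + y - s + 1) / (x + y)) ^ 2 +
        s * ((x + y - s + 1) / (x + y)) := by
  have h : x * y * s = (x + y + 1) * (x + y + x * y) := by
    rw [heq]
    field_simp
    ring
  have h4 : (4 * (x + y) ^ 4 : ℂ) ≠ 0 :=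
    mul_ne_zero (by norm_num) (pow_ne_zero _ hxy)
  have key : ((s - 1) * (x - y) * (x + y - s + 1)) ^ 2 =
      4 * (x + y) * (x + y - s + 1) ^ 3 +
        ((s - 3) ^ 2 - 12) * (x + y) ^ 2 * (x + y - s + 1) ^ 2 +
        4 * s * (x + y) ^ 3 * (x + y - s + 1) := by
    linear_combination (4 * (s - 1) ^ 2 * (x + y - s + 1)) * h
  have t1 : ((x + y - s + 1) / (x + y)) ^ 3 =
      (4 * (x + y) * (x + y - s + 1) ^ 3) / (4 * (x + y) ^ 4) := by
    rw [div_pow, div_eq_div_iff (pow_ne_zero 3 hxy) h4]; ring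
  have t2 : ((s - 3) ^ 2 - 12) / 4 * ((x + y - s + 1) / (x + y)) ^ 2 =
      (((s - 3) ^ 2 - 12) * (x + y) ^ 2 * (x + y - s + 1) ^ 2) / (4 * (x + y) ^ 4) := by
    rw [div_pow, div_mul_div_comm,
      div_eq_div_iff (mul_ne_zero (by norm_num) (pow_ne_zero 2 hxy)) h4]
    ring
  have t3 : s * ((x + y - s + 1) / (x + y)) =
      (4 * s * (x + y) ^ 3 * (x + y - s + 1)) / (4 * (x + y) ^ 4) := by
    rw [mul_div_assoc', div_eq_div_iff hxy h4]; ring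
  rw [t1, t2, t3, ← add_div, ← add_div, div_pow,
    div_eq_div_iff (pow_ne_zero 2 (mul_ne_zero (by norm_num) (pow_ne_zero 2 hxy))) h4]
  linear_combination (4 * (x + y) ^ 4) * key
end

section
/- The polynomial X^2 + ((s-3)^2 - 12)/4 * X + s in X splits over Q(t) after the substitution s = 2(t + 1/t) + 5; equivalently, the discriminant (s^4 - 12s^3 + 30s^2 - 28s + 9)/16 = (s-9)(s-1)^3/16 becomes a square in Q(t) under this substitution. -/
theorem stmt_12 :
    ∃ f : RatFunc ℚ,
      ((2 * (RatFunc.X + RatFunc.X⁻¹) + 5 - 9) *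
          (2 * (RatFunc.X + RatFunc.X⁻¹) + 5 - 1) ^ 3) / 16 = f ^ 2 := by
  use (RatFunc.X - 1) * (RatFunc.X + 1) ^ 3 / RatFunc.X ^ 2
  have hX : (RatFunc.X : RatFunc ℚ) ≠ 0 := RatFunc.X_ne_zero
  have h16 : (16 : RatFunc ℚ) ≠ 0 := by
    have h : (16 : RatFunc ℚ) = algebraMap (Polynomial ℚ) (RatFunc ℚ) 16 := (map_ofNat _ 16).symm
    rw [h, Ne, FaithfulSMul.algebraMap_eq_zero_iff]
    norm_num
  field_simp
  ring
end

section
/- Let x, y, t be nonzero complex numbers with |x| = |y| = 1, |t| > 1, and 2(t + 1/t) + 5 = (x + y + 1)(1/x + 1/y + 1). Then t is real and t ∈ [-2, -1). -/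
theorem stmt_14 (x y t : ℂ) (hx : ‖x‖ = 1) (hy : ‖y‖ = 1)
    (ht : 1 < ‖t‖) (ht0 : t ≠ 0)
    (heq : 2 * (t + t⁻¹) + 5 = (x + y + 1) * (x⁻¹ + y⁻¹ + 1)) :
    t.im = 0 ∧ t.re ∈ Set.Ico (-2 : ℝ) (-1) := by
  -- rewrite RHS as normSq
  rw [Complex.inv_eq_conj hx, Complex.inv_eq_conj hy] at heq
  have hconj : (starRingEnd ℂ) x + (starRingEnd ℂ) y + 1 = (starRingEnd ℂ) (x + y + 1) := by
    simp
  rw [hconj, Complex.mul_conj] at heq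
  set r : ℝ := Complex.normSq (x + y + 1) with hr
  have hr0 : 0 ≤ r := Complex.normSq_nonneg _
  have hr9 : r ≤ 9 := by
    have habs : ‖x + y + 1‖ ≤ 3 := by
      calc ‖x + y + 1‖ ≤ ‖x + y‖ + ‖(1:ℂ)‖ :=
            norm_add_le _ _
        _ ≤ ‖x‖ + ‖y‖ + ‖(1:ℂ)‖ := by
            have := norm_add_le x y; linarith
        _ = 3 := by rw [hx, hy]; simp; norm_num
    have := Complex.sq_norm (x + y + 1)
    nlinarith [norm_nonneg (x + y + 1)]
  have hnst : 1 < Complex.normSq t := by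
    have := Complex.sq_norm t
    nlinarith
  have him := congrArg Complex.im heq
  have hre := congrArg Complex.re heq
  simp [Complex.add_im, Complex.mul_im, Complex.inv_im, Complex.add_re, Complex.mul_re,
    Complex.inv_re] at him hre
  -- imaginary part
  have hnst0 : Complex.normSq t ≠ 0 := by positivity
  have htim : t.im = 0 := by
    have h1 : t.im * (1 - (Complex.normSq t)⁻¹) = 0 := by
      field_simp at him ⊢
      nlinarith [him]
    have h2 : (Complex.normSq t)⁻¹ < 1 := by
      rw [inv_lt_one_iff₀]; right; exact hnst
    rcases mul_eq_zero.1 h1 with h | h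
    · exact h
    · nlinarith
  refine ⟨htim, ?_, ?_⟩ <;>
  · set a := t.re with ha
    have hns : Complex.normSq t = a ^ 2 := by
      rw [Complex.normSq_apply, htim]; ring
    have ha2 : 1 < a ^ 2 := by rw [← hns]; exact hnst
    have ha0 : a ≠ 0 := by intro h; rw [h] at ha2; norm_num at ha2
    -- real part equation: 2*(a + a / normSq t) + 5 = r
    rw [hns] at hre
    have key : 2 * (a ^ 2 + 1) + 5 * a = r * a := by
      have h3 : (2 * (a ^ 2 + 1) + 5 * a) * a = (r * a) * a := by
        field_simp at hre
        linear_combination a * hre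
      exact mul_right_cancel₀ ha0 h3
    have halt : a < -1 := by
      by_contra h
      push_neg at h
      have h1 : 1 < a := by nlinarith
      nlinarith [sq_nonneg (a - 1),
        mul_nonneg (by linarith : (0:ℝ) ≤ a) (by linarith : (0:ℝ) ≤ 9 - r)]
    first
      | nlinarith [mul_nonneg hr0 (by linarith : (0:ℝ) ≤ -a)]
      | linarith
end

section
/- Let x, y be complex numbers on the unit circle and Z a complex number with |Z| > 1 such that (x-1)^2*(y-1)^2 = ((Z-1)^4/Z^2)*x*y. Then Z is real and Z ∈ (1, 3 + 2*sqrt(2)]. -/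
lemma aux_16 (a : ℝ) (Z : ℂ) (ha1 : -2 ≤ a) (ha2 : a ≤ 6)
    (hZ : 1 < ‖Z‖) (h : Z ^ 2 + 1 = (a : ℂ) * Z) :
    Z.im = 0 ∧ Z.re ∈ Set.Ioc (1 : ℝ) (3 + 2 * Real.sqrt 2) := by
  have habs : 1 < Z.re ^ 2 + Z.im ^ 2 := by
    have h1 : (1:ℝ) < ‖Z‖ ^ 2 := by nlinarith [norm_nonneg Z]
    rw [Complex.sq_norm, Complex.normSq_apply] at h1
    nlinarith
  rw [Complex.ext_iff] at h
  obtain ⟨h1, h2⟩ := h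
  simp [pow_two, Complex.mul_re, Complex.mul_im] at h1 h2
  have h2' : Z.im * (2 * Z.re - a) = 0 := by linear_combination h2
  have hq0 : Z.im = 0 := by
    rcases mul_eq_zero.mp h2' with h | h
    · exact h
    · exfalso
      have ha : a = 2 * Z.re := by linarith
      rw [ha] at h1
      nlinarith
  rw [hq0] at habs h1
  have hp1 : 1 < Z.re := by
    by_contra hple
    push_neg at hple
    have hpneg : Z.re < -1 := by nlinarith
    nlinarith [sq_nonneg (Z.re + 1)]
  refine ⟨hq0, hp1, ?_⟩
  have hs2 : Real.sqrt 2 ^ 2 = 2 := Real.sq_sqrt (by norm_num)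
  have hs1 : (1:ℝ) ≤ Real.sqrt 2 := by
    nlinarith [Real.sqrt_nonneg 2]
  nlinarith [sq_nonneg (Z.re - 3 - 2 * Real.sqrt 2), sq_nonneg (Z.re - 3 + 2 * Real.sqrt 2)]

theorem stmt_16 (x y Z : ℂ) (hx : ‖x‖ = 1) (hy : ‖y‖ = 1)
    (hZ : 1 < ‖Z‖)
    (heq : (x - 1) ^ 2 * (y - 1) ^ 2 * Z ^ 2 = (Z - 1) ^ 4 * x * y) :
    Z.im = 0 ∧ Z.re ∈ Set.Ioc (1 : ℝ) (3 + 2 * Real.sqrt 2) := by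
  have hx0 : x ≠ 0 := by intro h; simp [h] at hx
  have hy0 : y ≠ 0 := by intro h; simp [h] at hy
  have hnx : x * (starRingEnd ℂ) x = 1 := by
    rw [Complex.mul_conj]
    norm_cast
    rw [← Complex.sq_norm, hx]; norm_num
  have hny : y * (starRingEnd ℂ) y = 1 := by
    rw [Complex.mul_conj]
    norm_cast
    rw [← Complex.sq_norm, hy]; norm_num
  have haddx : x + (starRingEnd ℂ) x = ((2 * x.re : ℝ) : ℂ) := Complex.add_conj x
  have haddy : y + (starRingEnd ℂ) y = ((2 * y.re : ℝ) : ℂ) := Complex.add_conj y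
  have hax : (x - 1) ^ 2 = ((2 * x.re - 2 : ℝ) : ℂ) * x := by
    push_cast
    push_cast at haddx
    linear_combination x * haddx - hnx
  have hay : (y - 1) ^ 2 = ((2 * y.re - 2 : ℝ) : ℂ) * y := by
    push_cast
    push_cast at haddy
    linear_combination y * haddy - hny
  set c : ℝ := (2 * x.re - 2) * (2 * y.re - 2) with hc
  have hcast : ((c : ℝ) : ℂ) = ((2 * x.re - 2 : ℝ) : ℂ) * ((2 * y.re - 2 : ℝ) : ℂ) := by
    rw [hc]; push_cast; ring
  have key : (Z - 1) ^ 4 = ((c : ℝ) : ℂ) * Z ^ 2 := by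
    apply mul_right_cancel₀ (mul_ne_zero hx0 hy0)
    push_cast at hax hay hcast
    linear_combination -heq + Z ^ 2 * (y - 1) ^ 2 * hax + Z ^ 2 * (2 * x.re - 2) * x * hay - Z ^ 2 * x * y * hcast
  have hxre : |x.re| ≤ 1 := by
    have := Complex.abs_re_le_norm x; rwa [hx] at this
  have hyre : |y.re| ≤ 1 := by
    have := Complex.abs_re_le_norm y; rwa [hy] at this
  rw [abs_le] at hxre hyre
  have hc0 : 0 ≤ c := by nlinarith [hxre.2, hyre.2]
  have hc16 : c ≤ 16 := by nlinarith [hxre.1, hyre.1, hxre.2, hyre.2]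
  set s : ℝ := Real.sqrt c with hs
  have hs2 : s ^ 2 = c := Real.sq_sqrt hc0
  have hs0 : 0 ≤ s := Real.sqrt_nonneg c
  have hs4 : s ≤ 4 := by nlinarith
  have hsc : ((s : ℝ) : ℂ) ^ 2 = ((c : ℝ) : ℂ) := by
    norm_cast
  have hfac : ((Z - 1) ^ 2 - (s : ℂ) * Z) * ((Z - 1) ^ 2 + (s : ℂ) * Z) = 0 := by
    linear_combination key - Z ^ 2 * hsc
  rcases mul_eq_zero.mp hfac with h | h
  · have heq' : Z ^ 2 + 1 = ((2 + s : ℝ) : ℂ) * Z := by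
      push_cast
      linear_combination h
    exact aux_16 (2 + s) Z (by linarith) (by linarith) hZ heq'
  · have heq' : Z ^ 2 + 1 = ((2 - s : ℝ) : ℂ) * Z := by
      push_cast
      linear_combination h
    exact aux_16 (2 - s) Z (by linarith) (by linarith) hZ heq'
end
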